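/- Let n be a finite index type, Q : Matrix n n ℝ a positive semidefinite matrix, a, y : n → ℝ with Q *ᵥ y = a, and ε ≥ 0. Then for every x : n → ℝ with x ⬝ᵥ (Q *ᵥ x) ≤ ε², we have a ⬝ᵥ x ≤ ε · Real.sqrt (a ⬝ᵥ y). In particular, the optimal value of the problem: maximize a ⬝ᵥ x subject to x ⬝ᵥ (Q *ᵥ x) ≤ ε², is at most ε·√(aᵀy). -/

import Mathlib

open Matrix

/-- Upper bound on the value of the QCLP: if `Q y = a`, then every `x` with
`xᵀQx ≤ ε²` satisfies `a ⬝ᵥ x ≤ ε √(aᵀy)`. -/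
theorem qclp_value_upper_bound
    {n : Type*} [Fintype n]
    (Q : Matrix n n ℝ) (hQ : Q.PosSemidef) (a y : n → ℝ)
    (hy : Q *ᵥ y = a) (ε : ℝ) (hε : 0 ≤ ε) :
    ∀ x : n → ℝ, x ⬝ᵥ (Q *ᵥ x) ≤ ε ^ 2 → a ⬝ᵥ x ≤ ε * Real.sqrt (a ⬝ᵥ y) := by
  intro x hx
  have hsym : Qᵀ = Q := by
    have := hQ.1.eq
    rw [← Matrix.conjTranspose_eq_transpose_of_trivial]; exact hQ.1
  -- key rewrites
  have hax : a ⬝ᵥ x = y ⬝ᵥ (Q *ᵥ x) := by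
    rw [← hy, Matrix.dotProduct_mulVec, dotProduct_comm]
    rw [← Matrix.mulVec_transpose, hsym, dotProduct_comm]
  have hay : a ⬝ᵥ y = y ⬝ᵥ (Q *ᵥ y) := by
    rw [← hy, dotProduct_comm]
  set A := x ⬝ᵥ (Q *ᵥ x) with hA
  set B := y ⬝ᵥ (Q *ᵥ x) with hB
  set C := y ⬝ᵥ (Q *ᵥ y) with hC
  have hA0 : 0 ≤ A := by simpa using hQ.dotProduct_mulVec_nonneg x
  have hC0 : 0 ≤ C := by simpa using hQ.dotProduct_mulVec_nonneg y
  have hBx : x ⬝ᵥ (Q *ᵥ y) = B := by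
    rw [hB, Matrix.dotProduct_mulVec, dotProduct_comm]
    rw [← Matrix.mulVec_transpose, hsym]
  have key : ∀ t : ℝ, 0 ≤ C * (t * t) + (2 * B) * t + A := by
    intro t
    have h : (0:ℝ) ≤ (x + t • y) ⬝ᵥ (Q *ᵥ (x + t • y)) := by
      simpa using hQ.dotProduct_mulVec_nonneg (x + t • y)
    have : (x + t • y) ⬝ᵥ (Q *ᵥ (x + t • y)) =
        A + 2 * B * t + C * t ^ 2 := by
      simp only [Matrix.mulVec_add, Matrix.mulVec_smul, add_dotProduct,
        dotProduct_add, dotProduct_smul, smul_dotProduct,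
        smul_eq_mul, hBx, ← hA, ← hB, ← hC]
      ring
    rw [this] at h
    nlinarith
  have hdisc := discrim_le_zero key
  rw [discrim] at hdisc
  -- (2B)^2 - 4CA ≤ 0
  have hB2 : B ^ 2 ≤ C * A := by nlinarith
  have hB2' : B ^ 2 ≤ (ε * Real.sqrt C) ^ 2 := by
    have : (ε * Real.sqrt C) ^ 2 = ε ^ 2 * C := by
      rw [mul_pow, Real.sq_sqrt hC0]
    rw [this]
    calc B ^ 2 ≤ C * A := hB2
      _ ≤ C * ε ^ 2 := by exact mul_le_mul_of_nonneg_left hx hC0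
      _ = ε ^ 2 * C := by ring
  have hεs : 0 ≤ ε * Real.sqrt C := mul_nonneg hε (Real.sqrt_nonneg _)
  have hBle : B ≤ ε * Real.sqrt C := by nlinarith
  rw [hax, hay]
  exact hBle
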